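/- Let ζ₇ = exp(2πi/7) ∈ ℂ, ξ = ζ₇ + ζ₇⁻¹, and let L₁ be the smallest subfield of ℂ containing i√3 and ξ (that is, L₁ = ℚ(√−3, ξ)). Then ξ − 1 is not a square in L₁: there is no v ∈ L₁ with v² = ξ − 1. -/

import Mathlib

open Complex Polynomial

noncomputable def mZ7 : Polynomial ℤ := X^3 + X^2 - 2*X - 1

lemma mZ7_monic : mZ7.Monic := by unfold mZ7; monicity!

lemma mZ7_natDegree : mZ7.natDegree = 3 := by unfold mZ7; compute_degree!

lemma mZ7_mod2_irred : Irreducible (mZ7.map (Int.castRingHom (ZMod 2))) := by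
  have hdeg : (mZ7.map (Int.castRingHom (ZMod 2))).natDegree = 3 := by
    rw [mZ7_monic.natDegree_map, mZ7_natDegree]
  rw [Polynomial.irreducible_iff_roots_eq_zero_of_degree_le_three (by omega) (by omega)]
  rw [Multiset.eq_zero_iff_forall_notMem]
  intro r hr
  rw [mem_roots ((mZ7_monic.map _).ne_zero)] at hr
  have h := hr
  rw [IsRoot, eval_map, mZ7] at h
  simp only [eval₂_sub, eval₂_add, eval₂_pow, eval₂_X, eval₂_mul, eval₂_ofNat,
    eval₂_one] at h
  clear hr
  revert h
  revert r
  decide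

lemma mQ7_irred : Irreducible (mZ7.map (Int.castRingHom ℚ)) := by
  rw [← Polynomial.IsPrimitive.Int.irreducible_iff_irreducible_map_cast mZ7_monic.isPrimitive]
  exact mZ7_monic.irreducible_of_irreducible_map _ _ mZ7_mod2_irred

lemma cubic_of_seventh (z : ℂ) (hz1 : z ≠ 1) (hz7 : z^7 = 1) :
    (z + z⁻¹)^3 + (z + z⁻¹)^2 - 2*(z + z⁻¹) - 1 = 0 := by
  have hsum : z^6+z^5+z^4+z^3+z^2+z+1 = 0 := by
    have h : (z - 1) * (z^6+z^5+z^4+z^3+z^2+z+1) = 0 := by linear_combination hz7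
    rcases mul_eq_zero.mp h with h | h
    · exact absurd (sub_eq_zero.mp h) hz1
    · exact h
  have hinv : z⁻¹ = z^6 := inv_eq_of_mul_eq_one_left (by linear_combination hz7)
  rw [hinv]
  linear_combination hsum + (3*z + 3*z^6 + z^4*(z^7+1) + 2 + z^5) * hz7

lemma two_cos_exp (t : ℝ) :
    Complex.exp (t * Complex.I) + (Complex.exp (t * Complex.I))⁻¹
      = ((2 * Real.cos t : ℝ) : ℂ) := by
  rw [← Complex.exp_neg, ← neg_mul, Complex.exp_mul_I, Complex.exp_mul_I]
  push_cast [Complex.ofReal_cos]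
  simp only [Complex.cos_neg, Complex.sin_neg]
  ring

/-- Example 3 of the paper (anisotropy for `C₁`): with `ξ = ζ₇ + ζ₇⁻¹` and
`L₁ = ℚ(√−3, ξ) ⊂ ℂ`, the element `ξ − 1` is not a square in `L₁`. -/
theorem xi7_sub_one_not_square
    (ζ : ℂ) (hζ : ζ = Complex.exp (2 * Real.pi * Complex.I / 7))
    (ξ : ℂ) (hξ : ξ = ζ + ζ⁻¹)
    (L₁ : IntermediateField ℚ ℂ)
    (hL : L₁ = IntermediateField.adjoin ℚ {Complex.I * Real.sqrt 3, ξ}) :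
    ∀ v : ℂ, v ∈ L₁ → v ^ 2 ≠ ξ - 1 := by
  intro v hv hsq
  set α : ℂ := Complex.I * Real.sqrt 3 with hα
  have hprim : IsPrimitiveRoot ζ 7 := hζ ▸ Complex.isPrimitiveRoot_exp 7 (by norm_num)
  have hζ7 : ζ ^ 7 = 1 := hprim.pow_eq_one
  have hζ1 : ζ ≠ 1 := hprim.ne_one (by norm_num)
  have hζ21 : ζ ^ 2 ≠ 1 := hprim.pow_ne_one_of_pos_of_lt (by norm_num) (by norm_num)
  set θ : ℝ := 2 * Real.pi / 7 with hθ
  have hζθ : ζ = Complex.exp (θ * Complex.I) := by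
    rw [hζ]; congr 1; rw [hθ]; push_cast; ring
  have hξr : ξ = ((2 * Real.cos θ : ℝ) : ℂ) := by rw [hξ, hζθ, two_cos_exp]
  set ξ₂ : ℂ := ((2 * Real.cos (2*θ) : ℝ) : ℂ) with hξ₂
  have hζ2θ : ζ ^ 2 = Complex.exp ((2*θ : ℝ) * Complex.I) := by
    rw [hζθ, ← Complex.exp_nat_mul]; congr 1; push_cast; ring
  have hξ₂r : ξ₂ = ζ^2 + (ζ^2)⁻¹ := by rw [hζ2θ, two_cos_exp]
  have hcub : ξ^3 + ξ^2 - 2*ξ - 1 = 0 := by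
    rw [hξ]; exact cubic_of_seventh ζ hζ1 hζ7
  have hcub₂ : ξ₂^3 + ξ₂^2 - 2*ξ₂ - 1 = 0 := by
    rw [hξ₂r]
    exact cubic_of_seventh (ζ^2) hζ21 (by rw [← pow_mul, mul_comm, pow_mul, hζ7]; norm_num)
  have hpi := Real.pi_pos
  have hc1 : (1:ℝ) < 2 * Real.cos θ := by
    have h := Real.cos_lt_cos_of_nonneg_of_le_pi (by positivity) (by linarith)
      (show θ < Real.pi/3 by rw [hθ]; linarith)
    rw [Real.cos_pi_div_three] at h
    linarith
  have hc2 : 2 * Real.cos (2*θ) < 1 := by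
    have h := Real.cos_nonpos_of_pi_div_two_le_of_le
      (show Real.pi/2 ≤ 2*θ by rw [hθ]; linarith)
      (show 2*θ ≤ Real.pi + Real.pi/2 by rw [hθ]; linarith)
    linarith
  have hα2 : α^2 = -3 := by
    rw [hα, mul_pow, Complex.I_sq]
    rw [show ((Real.sqrt 3 : ℝ) : ℂ)^2 = ((Real.sqrt 3 ^ 2 : ℝ) : ℂ) by push_cast; ring]
    rw [Real.sq_sqrt (by norm_num : (0:ℝ) ≤ 3)]
    push_cast; ring
  have hαalg : IsAlgebraic ℚ α := by
    refine ⟨X^2 + 3, ?_, ?_⟩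
    · have hdeg : (X^2 + 3 : ℚ[X]).natDegree = 2 := by compute_degree!
      intro h; rw [h] at hdeg; simp at hdeg
    · simp only [map_add, map_pow, aeval_X, map_ofNat, hα2]; norm_num
  have hξalg : IsAlgebraic ℚ ξ := by
    refine ⟨X^3 + X^2 - 2*X - 1, ?_, ?_⟩
    · have hdeg : (X^3 + X^2 - 2*X - 1 : ℚ[X]).natDegree = 3 := by compute_degree!
      intro h; rw [h] at hdeg; simp at hdeg
    · simp only [map_sub, map_add, map_pow, aeval_X, map_mul, map_ofNat, map_one]
      linear_combination hcub
  have hsub : v ∈ Algebra.adjoin ℚ ({α, ξ} : Set ℂ) := by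
    have h1 : (IntermediateField.adjoin ℚ ({α, ξ} : Set ℂ)).toSubalgebra
        = Algebra.adjoin ℚ ({α, ξ} : Set ℂ) := by
      apply IntermediateField.adjoin_toSubalgebra_of_isAlgebraic
      rintro x (rfl | rfl)
      exacts [hαalg, hξalg]
    rw [← h1]
    rw [hL] at hv
    exact hv
  set A := Algebra.adjoin ℚ ({ξ} : Set ℂ) with hA
  have h3A : (3:ℂ) ∈ A := by exact_mod_cast A.natCast_mem 3
  have key : ∀ x ∈ Algebra.adjoin ℚ ({α, ξ} : Set ℂ),
      ∃ a b, a ∈ A ∧ b ∈ A ∧ x = a + b * α := by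
    intro x hx
    induction hx using Algebra.adjoin_induction with
    | mem y hy =>
      simp only [Set.mem_insert_iff, Set.mem_singleton_iff] at hy
      rcases hy with rfl | rfl
      · exact ⟨0, 1, zero_mem _, one_mem _, by ring⟩
      · exact ⟨y, 0, Algebra.subset_adjoin (Set.mem_singleton _), zero_mem _, by ring⟩
    | algebraMap r => exact ⟨algebraMap ℚ ℂ r, 0, algebraMap_mem _ r, zero_mem _, by ring⟩
    | add x y hx hy ihx ihy =>
      obtain ⟨a, b, ha, hb, rfl⟩ := ihx
      obtain ⟨c, d, hc, hd, rfl⟩ := ihy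
      exact ⟨a + c, b + d, add_mem ha hc, add_mem hb hd, by ring⟩
    | mul x y hx hy ihx ihy =>
      obtain ⟨a, b, ha, hb, rfl⟩ := ihx
      obtain ⟨c, d, hc, hd, rfl⟩ := ihy
      exact ⟨a*c - 3*(b*d), a*d + b*c,
        sub_mem (mul_mem ha hc) (mul_mem h3A (mul_mem hb hd)),
        add_mem (mul_mem ha hd) (mul_mem hb hc),
        by linear_combination (b*d) * hα2⟩
  obtain ⟨a, b, ha, hb, rfl⟩ := key v hsub
  have hconjA : ∀ x ∈ A, (starRingEnd ℂ) x = x := by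
    intro x hx
    induction hx using Algebra.adjoin_induction with
    | mem y hy =>
      simp only [Set.mem_singleton_iff] at hy
      subst hy
      rw [hξr]; exact Complex.conj_ofReal _
    | algebraMap r => simp
    | add x y hx hy ihx ihy => rw [map_add, ihx, ihy]
    | mul x y hx hy ihx ihy => rw [map_mul, ihx, ihy]
  have hconjα : (starRingEnd ℂ) α = -α := by
    rw [hα, map_mul, Complex.conj_I, Complex.conj_ofReal]; ring
  have hconjξ : (starRingEnd ℂ) ξ = ξ := by rw [hξr]; exact Complex.conj_ofReal _
  have h1 : (a - b*α)^2 = ξ - 1 := by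
    have h := congrArg (starRingEnd ℂ) hsq
    rw [map_pow, map_add, map_mul, hconjA a ha, hconjA b hb, hconjα,
      map_sub, map_one, hconjξ] at h
    linear_combination h
  have hα0 : α ≠ 0 := by
    rw [hα]
    refine mul_ne_zero Complex.I_ne_zero ?_
    rw [Complex.ofReal_ne_zero]
    positivity
  have hab : a * b = 0 := by
    have h4 : (4 * (a*b)) * α = 0 := by linear_combination hsq - h1
    have h5 := (mul_eq_zero.mp h4).resolve_right hα0
    rcases mul_eq_zero.mp h5 with h | h
    · norm_num at h
    · exact h
  rcases mul_eq_zero.mp hab with ha0 | hb0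
  · -- a = 0 : then v² = -3b² < 0, but ξ - 1 > 0
    subst ha0
    have hbr : ((b.re : ℝ) : ℂ) = b := Complex.conj_eq_iff_re.mp (hconjA b hb)
    have hkey : ((-3 * b.re^2 : ℝ) : ℂ) = ξ - 1 := by
      push_cast
      rw [hbr]
      linear_combination hsq + (-(b^2)) * hα2
    rw [hξr] at hkey
    have hkey' : (-3 * b.re^2 : ℝ) = 2 * Real.cos θ - 1 := by exact_mod_cast hkey
    nlinarith [sq_nonneg b.re]
  · -- b = 0 : then ξ - 1 is a square in ℚ(ξ)
    subst hb0
    rw [hA, Algebra.adjoin_singleton_eq_range_aeval] at ha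
    obtain ⟨p, hp'⟩ := ha
    have hp : (Polynomial.aeval ξ) p = a := hp'
    have hmon : (mZ7.map (Int.castRingHom ℚ)).Monic := mZ7_monic.map _
    have haev : aeval ξ (mZ7.map (Int.castRingHom ℚ)) = 0 := by
      rw [show (Int.castRingHom ℚ) = algebraMap ℤ ℚ from rfl, aeval_map_algebraMap, mZ7]
      simp only [map_sub, map_add, map_pow, aeval_X, map_mul, map_ofNat, map_one]
      linear_combination hcub
    have hmin : minpoly ℚ ξ = mZ7.map (Int.castRingHom ℚ) :=
      (minpoly.eq_of_irreducible_of_monic mQ7_irred haev hmon).symm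
    have hdvd : mZ7.map (Int.castRingHom ℚ) ∣ p^2 - (X - 1) := by
      rw [← hmin]
      apply minpoly.dvd
      simp only [map_sub, map_pow, map_one, aeval_X, hp]
      linear_combination hsq
    obtain ⟨q, hq⟩ := hdvd
    have h2 := congrArg (aeval ξ₂) hq
    have haev₂ : aeval ξ₂ (mZ7.map (Int.castRingHom ℚ)) = 0 := by
      rw [show (Int.castRingHom ℚ) = algebraMap ℤ ℚ from rfl, aeval_map_algebraMap, mZ7]
      simp only [map_sub, map_add, map_pow, aeval_X, map_mul, map_ofNat, map_one]
      linear_combination hcub₂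
    rw [map_sub, map_pow, map_sub, aeval_X, map_one, map_mul, haev₂, zero_mul] at h2
    have hre : aeval ξ₂ p = ((aeval (2*Real.cos (2*θ)) p : ℝ) : ℂ) := by
      rw [hξ₂, ← Complex.coe_algebraMap, Polynomial.aeval_algebraMap_apply]
    rw [hre, hξ₂] at h2
    have hteq : (aeval (2*Real.cos (2*θ)) p : ℝ)^2 = 2*Real.cos (2*θ) - 1 := by
      have : (((aeval (2*Real.cos (2*θ)) p : ℝ)^2 : ℝ) : ℂ)
          = ((2*Real.cos (2*θ) - 1 : ℝ) : ℂ) := by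
        push_cast at h2 ⊢
        linear_combination h2
      exact_mod_cast this
    nlinarith [sq_nonneg (aeval (2*Real.cos (2*θ)) p : ℝ)]
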